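/- If T is a spider obtained from the star K_{1,t} (t ≥ 2) by subdividing q of its edges (0 ≤ q ≤ t), then γ_{StR}(T) = 1 + q + ⌈t/2⌉. -/

import Mathlib

namespace SimpleGraph

variable {V : Type*}

/-- The degree of a vertex (cardinality of its open neighborhood). -/
noncomputable def deg (G : SimpleGraph V) (v : V) : ℕ := (G.neighborSet v).ncard

/-- Maximum degree. -/
noncomputable def maxDeg [Fintype V] (G : SimpleGraph V) : ℕ :=
  Finset.univ.sup fun v => G.deg v

/-- A strong Roman dominating function: `f : V → {0,1,...,⌈Δ/2⌉+1}` such that every vertex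
with value 0 has a neighbor `w` with `f w ≥ 2` and `f w ≥ 1 + ⌈|N(w) ∩ B₀|/2⌉`. -/
def IsStRDF [Fintype V] (G : SimpleGraph V) (f : V → ℕ) : Prop :=
  (∀ v, f v ≤ (G.maxDeg + 1) / 2 + 1) ∧
  ∀ v, f v = 0 → ∃ w, G.Adj v w ∧ 2 ≤ f w ∧
    1 + ((G.neighborSet w ∩ {u | f u = 0}).ncard + 1) / 2 ≤ f w

/-- The strong Roman domination number. -/
noncomputable def gammaStR [Fintype V] (G : SimpleGraph V) : ℕ :=
  sInf {k | ∃ f, G.IsStRDF f ∧ ∑ v, f v = k}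

/-- A Roman dominating function. -/
def IsRDF (G : SimpleGraph V) (f : V → ℕ) : Prop :=
  (∀ v, f v ≤ 2) ∧ ∀ v, f v = 0 → ∃ w, G.Adj v w ∧ f w = 2

/-- The Roman domination number. -/
noncomputable def gammaR [Fintype V] (G : SimpleGraph V) : ℕ :=
  sInf {k | ∃ f, G.IsRDF f ∧ ∑ v, f v = k}

/-- A dominating set. -/
def IsDomSet (G : SimpleGraph V) (D : Set V) : Prop :=
  ∀ v ∉ D, ∃ w ∈ D, G.Adj v w

/-- The domination number. -/
noncomputable def gammaDom [Fintype V] (G : SimpleGraph V) : ℕ :=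
  sInf {k | ∃ D : Set V, G.IsDomSet D ∧ D.ncard = k}

end SimpleGraph


/-- The spider obtained from the star `K_{1,t}` by subdividing the first `q` edges
(`q ≤ t`). `none` is the center, `some (.inl i)` is the leaf `vᵢ`, and `some (.inr j)`
is the subdivision vertex `uⱼ` on the edge to leaf `v_j` (for `j < q`). -/
def spiderGraph (t q : ℕ) : SimpleGraph (Option (Fin t ⊕ Fin q)) where
  Adj a b :=
    (∃ i : Fin t, q ≤ (i : ℕ) ∧
      ((a = none ∧ b = some (.inl i)) ∨ (b = none ∧ a = some (.inl i)))) ∨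
    (∃ j : Fin q,
      (a = none ∧ b = some (.inr j)) ∨ (b = none ∧ a = some (.inr j))) ∨
    (∃ (i : Fin t) (j : Fin q), (i : ℕ) = (j : ℕ) ∧
      ((a = some (.inl i) ∧ b = some (.inr j)) ∨ (b = some (.inl i) ∧ a = some (.inr j))))
  symm := by
    constructor
    rintro a b (⟨i, hi, h⟩ | ⟨j, h⟩ | ⟨i, j, hij, h⟩)
    · exact Or.inl ⟨i, hi, h.symm⟩
    · exact Or.inr (Or.inl ⟨j, h.symm⟩)
    · exact Or.inr (Or.inr ⟨i, j, hij, h.symm⟩)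
  loopless := by
    constructor
    rintro a (⟨i, hi, (⟨h1, h2⟩ | ⟨h1, h2⟩)⟩ | ⟨j, (⟨h1, h2⟩ | ⟨h1, h2⟩)⟩ |
      ⟨i, j, hij, (⟨h1, h2⟩ | ⟨h1, h2⟩)⟩) <;> simp_all

namespace SpiderAux

open SimpleGraph Finset

variable {t q : ℕ}

lemma adj_none {w : Option (Fin t ⊕ Fin q)} :
    (spiderGraph t q).Adj none w ↔
      (∃ i : Fin t, q ≤ (i:ℕ) ∧ w = some (Sum.inl i)) ∨ (∃ j : Fin q, w = some (Sum.inr j)) := by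
  simp [spiderGraph]

lemma adj_inl {i : Fin t} {w : Option (Fin t ⊕ Fin q)} :
    (spiderGraph t q).Adj (some (Sum.inl i)) w ↔
      (q ≤ (i:ℕ) ∧ w = none) ∨ (∃ j : Fin q, (i:ℕ) = (j:ℕ) ∧ w = some (Sum.inr j)) := by
  simp [spiderGraph]

lemma adj_inr {j : Fin q} {w : Option (Fin t ⊕ Fin q)} :
    (spiderGraph t q).Adj (some (Sum.inr j)) w ↔
      w = none ∨ (∃ i : Fin t, (i:ℕ) = (j:ℕ) ∧ w = some (Sum.inl i)) := by
  simp [spiderGraph]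

/-- enumeration of the neighbors of the center -/
noncomputable def phi (t q : ℕ) : Fin t → Option (Fin t ⊕ Fin q) := fun i =>
  if h : (i:ℕ) < q then some (Sum.inr ⟨(i:ℕ), h⟩) else some (Sum.inl i)

lemma phi_inj : Function.Injective (phi t q) := by
  intro a b hab
  unfold phi at hab
  split_ifs at hab with h1 h2 h2 <;> simp_all
  exact Fin.ext hab

lemma range_phi (hq : q ≤ t) :
    Set.range (phi t q) = (spiderGraph t q).neighborSet none := by
  ext w
  simp only [Set.mem_range, SimpleGraph.mem_neighborSet, adj_none]
  constructor
  · rintro ⟨i, rfl⟩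
    unfold phi
    split_ifs with h
    · exact Or.inr ⟨⟨(i:ℕ), h⟩, rfl⟩
    · exact Or.inl ⟨i, not_lt.mp h, rfl⟩
  · rintro (⟨i, hi, rfl⟩ | ⟨j, rfl⟩)
    · exact ⟨i, by unfold phi; rw [dif_neg (not_lt.mpr hi)]⟩
    · refine ⟨⟨(j:ℕ), j.isLt.trans_le hq⟩, ?_⟩
      unfold phi
      rw [dif_pos j.isLt]

lemma deg_none (hq : q ≤ t) : (spiderGraph t q).deg none = t := by
  rw [SimpleGraph.deg, ← range_phi hq, ← Set.image_univ,
    Set.ncard_image_of_injective _ phi_inj, Set.ncard_univ, Nat.card_eq_fintype_card,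
    Fintype.card_fin]

lemma maxDeg_ge (hq : q ≤ t) : t ≤ (spiderGraph t q).maxDeg := by
  calc t = (spiderGraph t q).deg none := (deg_none hq).symm
    _ ≤ _ := Finset.le_sup (f := fun v => (spiderGraph t q).deg v) (Finset.mem_univ none)

lemma sum_decomp (f : Option (Fin t ⊕ Fin q) → ℕ) :
    ∑ v, f v = f none + ∑ i : Fin t, f (some (Sum.inl i)) + ∑ j : Fin q, f (some (Sum.inr j)) := by
  rw [Fintype.sum_option, Fintype.sum_sum_type]
  ring

lemma F1_eq (hq : q ≤ t) :
    Finset.univ.filter (fun i : Fin t => (i:ℕ) < q)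
      = Finset.univ.image (Fin.castLE hq) := by
  ext i
  simp only [Finset.mem_filter, Finset.mem_univ, true_and, Finset.mem_image]
  constructor
  · intro h; exact ⟨⟨(i:ℕ), h⟩, Fin.ext rfl⟩
  · rintro ⟨j, rfl⟩; exact j.isLt

lemma sum_F1 (hq : q ≤ t) (g : Fin t → ℕ) :
    ∑ i ∈ Finset.univ.filter (fun i : Fin t => (i:ℕ) < q), g i
      = ∑ j : Fin q, g (Fin.castLE hq j) := by
  rw [F1_eq hq, Finset.sum_image (fun a _ b _ h => Fin.castLE_injective hq h)]

lemma card_F1 (hq : q ≤ t) :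
    (Finset.univ.filter (fun i : Fin t => (i:ℕ) < q)).card = q := by
  rw [F1_eq hq, Finset.card_image_of_injective _ (Fin.castLE_injective hq)]
  simp

end SpiderAux

namespace SpiderAux

variable {t q : ℕ}

noncomputable def F (t q : ℕ) : Option (Fin t ⊕ Fin q) → ℕ := fun v =>
  Option.elim v (1 + (t+1)/2)
    (Sum.elim (fun i => if (i:ℕ) < q then 1 else 0) (fun _ => 0))

lemma F_none : F t q none = 1 + (t+1)/2 := rfl
lemma F_inl (i : Fin t) : F t q (some (Sum.inl i)) = if (i:ℕ) < q then 1 else 0 := rfl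
lemma F_inr (j : Fin q) : F t q (some (Sum.inr j)) = 0 := rfl

lemma mem_set (ht : 2 ≤ t) (hq : q ≤ t) :
    (1 + q + (t+1)/2) ∈ {k | ∃ f, (spiderGraph t q).IsStRDF f ∧ ∑ v, f v = k} := by
  classical
  refine ⟨F t q, ⟨?_, ?_⟩, ?_⟩
  · intro v
    have hm := maxDeg_ge (t := t) (q := q) hq
    have hdiv : (t+1)/2 ≤ ((spiderGraph t q).maxDeg + 1)/2 := Nat.div_le_div_right (by omega)
    match v with
    | none => rw [F_none]; omega
    | some (Sum.inl i) => rw [F_inl]; split_ifs <;> omega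
    | some (Sum.inr j) => rw [F_inr]; omega
  · intro v hv
    have hFc : 2 ≤ F t q none := by rw [F_none]; omega
    have hnb : 1 + (((spiderGraph t q).neighborSet none ∩ {u | F t q u = 0}).ncard + 1)/2
        ≤ F t q none := by
      have h1 : ((spiderGraph t q).neighborSet none ∩ {u | F t q u = 0}).ncard ≤ t := by
        have h2 := Set.ncard_le_ncard (Set.inter_subset_left
          (s := (spiderGraph t q).neighborSet none) (t := {u | F t q u = 0})) (Set.toFinite _)
        have h3 : ((spiderGraph t q).neighborSet none).ncard = t := deg_none hq
        omega
      have h4 := Nat.div_le_div_right (c := 2) (Nat.add_le_add_right h1 1)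
      rw [F_none]
      omega
    rcases v with _ | (i | j)
    · rw [F_none] at hv; omega
    · have hi : q ≤ (i:ℕ) := by
        by_contra h
        rw [F_inl, if_pos (not_le.mp h)] at hv
        omega
      exact ⟨none, adj_inl.mpr (Or.inl ⟨hi, rfl⟩), hFc, hnb⟩
    · exact ⟨none, adj_inr.mpr (Or.inl rfl), hFc, hnb⟩
  · rw [sum_decomp]
    have h1 : ∑ i : Fin t, F t q (some (Sum.inl i)) = q := by
      simp only [F_inl]
      rw [Finset.sum_boole]
      simpa using card_F1 hq
    have h2 : ∑ j : Fin q, F t q (some (Sum.inr j)) = 0 := by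
      simp [F_inr]
    rw [h1, h2, F_none]
    omega

end SpiderAux

namespace SpiderAux

open Finset

variable {t q : ℕ}

lemma lower (ht : 2 ≤ t) (hq : q ≤ t) (f : Option (Fin t ⊕ Fin q) → ℕ)
    (hf : (spiderGraph t q).IsStRDF f) :
    1 + q + (t+1)/2 ≤ ∑ v, f v := by
  classical
  obtain ⟨-, hdom⟩ := hf
  set cB := 1 + (((spiderGraph t q).neighborSet none ∩ {u | f u = 0}).ncard + 1)/2 with hcB
  -- witness facts
  have hleaf : ∀ i : Fin t, q ≤ (i:ℕ) → f (some (Sum.inl i)) = 0 →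
      2 ≤ f none ∧ cB ≤ f none := by
    intro i hi h0
    obtain ⟨w, hadj, h2, h3⟩ := hdom _ h0
    rw [adj_inl] at hadj
    rcases hadj with ⟨-, rfl⟩ | ⟨j, hij, rfl⟩
    · exact ⟨h2, h3⟩
    · exact absurd hij (by have := j.isLt; omega)
  have hleg : ∀ j : Fin q, f (some (Sum.inl (Fin.castLE hq j))) = 0 →
      2 ≤ f (some (Sum.inr j)) := by
    intro j h0
    obtain ⟨w, hadj, h2, h3⟩ := hdom _ h0
    rw [adj_inl] at hadj
    rcases hadj with ⟨hqi, rfl⟩ | ⟨j', hij, rfl⟩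
    · have : ((Fin.castLE hq j : Fin t) : ℕ) = (j : ℕ) := rfl
      have := j.isLt; omega
    · have : j' = j := Fin.ext (by
        have : ((Fin.castLE hq j : Fin t) : ℕ) = (j : ℕ) := rfl
        omega)
      subst this; exact h2
  have hUw : ∀ j : Fin q, f (some (Sum.inr j)) = 0 →
      2 ≤ f (some (Sum.inl (Fin.castLE hq j))) ∨ (2 ≤ f none ∧ cB ≤ f none) := by
    intro j h0
    obtain ⟨w, hadj, h2, h3⟩ := hdom _ h0
    rw [adj_inr] at hadj
    rcases hadj with rfl | ⟨i, hij, rfl⟩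
    · exact Or.inr ⟨h2, h3⟩
    · have : i = Fin.castLE hq j := Fin.ext hij
      subst this; exact Or.inl h2
  -- sum decomposition
  have hsplit : ∑ v, f v = f none
      + (∑ j : Fin q, (f (some (Sum.inl (Fin.castLE hq j))) + f (some (Sum.inr j))))
      + ∑ i ∈ Finset.univ.filter (fun i : Fin t => ¬ (i:ℕ) < q), f (some (Sum.inl i)) := by
    rw [sum_decomp f, ← Finset.sum_filter_add_sum_filter_not Finset.univ
      (fun i : Fin t => (i:ℕ) < q) (fun i => f (some (Sum.inl i))),
      sum_F1 hq (fun i => f (some (Sum.inl i))), Finset.sum_add_distrib]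
    ring
  have hcards := Finset.card_filter_add_card_filter_not
    (s := (Finset.univ : Finset (Fin t))) (p := fun i => (i:ℕ) < q)
  have hcardq := card_F1 (t := t) hq
  have hcardt : (Finset.univ : Finset (Fin t)).card = t := by simp
  rcases Nat.eq_zero_or_pos (f none) with hc0 | hc1
  · -- center has value 0
    have hlegs : ∀ j : Fin q,
        2 ≤ f (some (Sum.inl (Fin.castLE hq j))) + f (some (Sum.inr j)) := by
      intro j
      by_cases h0 : f (some (Sum.inl (Fin.castLE hq j))) = 0
      · have := hleg j h0; omega
      · by_cases h1 : f (some (Sum.inr j)) = 0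
        · rcases hUw j h1 with h | ⟨h, -⟩ <;> omega
        · omega
    have hleaves : ∀ i ∈ Finset.univ.filter (fun i : Fin t => ¬ (i:ℕ) < q),
        1 ≤ f (some (Sum.inl i)) := by
      intro i hi
      simp only [Finset.mem_filter, Finset.mem_univ, true_and, not_lt] at hi
      by_contra h
      have := (hleaf i hi (by omega)).1; omega
    have s1 := Finset.card_nsmul_le_sum Finset.univ
      (fun j : Fin q => f (some (Sum.inl (Fin.castLE hq j))) + f (some (Sum.inr j))) 2
      (fun j _ => hlegs j)
    have s2 := Finset.card_nsmul_le_sum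
      (Finset.univ.filter (fun i : Fin t => ¬ (i:ℕ) < q))
      (fun i => f (some (Sum.inl i))) 1 hleaves
    simp only [smul_eq_mul, Finset.card_univ, Fintype.card_fin, mul_one] at s1 s2
    omega
  · -- center has positive value
    set Zf : Finset (Fin t) :=
      Finset.univ.filter (fun i => ¬ (i:ℕ) < q ∧ f (some (Sum.inl i)) = 0) with hZf
    set Af : Finset (Fin q) :=
      Finset.univ.filter (fun j => f (some (Sum.inr j)) = 0 ∧
        f (some (Sum.inl (Fin.castLE hq j))) ≤ 1) with hAf
    have hlegbound : ∀ j : Fin q,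
        2 ≤ f (some (Sum.inl (Fin.castLE hq j))) + f (some (Sum.inr j))
          + (if j ∈ Af then 1 else 0) := by
      intro j
      by_cases hj : j ∈ Af
      · rw [if_pos hj]
        simp only [hAf, Finset.mem_filter, Finset.mem_univ, true_and] at hj
        by_cases h0 : f (some (Sum.inl (Fin.castLE hq j))) = 0
        · have := hleg j h0; omega
        · omega
      · rw [if_neg hj]
        simp only [hAf, Finset.mem_filter, Finset.mem_univ, true_and, not_and, not_le] at hj
        by_cases h0 : f (some (Sum.inl (Fin.castLE hq j))) = 0
        · have := hleg j h0; omega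
        · by_cases h1 : f (some (Sum.inr j)) = 0
          · have := hj h1; omega
          · omega
    have hleafbound : ∀ i ∈ Finset.univ.filter (fun i : Fin t => ¬ (i:ℕ) < q),
        1 ≤ f (some (Sum.inl i)) + (if i ∈ Zf then 1 else 0) := by
      intro i hi
      simp only [Finset.mem_filter, Finset.mem_univ, true_and] at hi
      by_cases hz : i ∈ Zf
      · rw [if_pos hz]; omega
      · rw [if_neg hz]
        simp only [hZf, Finset.mem_filter, Finset.mem_univ, true_and, not_and] at hz
        have := hz hi
        omega
    have s1 := Finset.card_nsmul_le_sum Finset.univ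
      (fun j : Fin q => f (some (Sum.inl (Fin.castLE hq j))) + f (some (Sum.inr j))
        + (if j ∈ Af then 1 else 0)) 2 (fun j _ => hlegbound j)
    have s2 := Finset.card_nsmul_le_sum
      (Finset.univ.filter (fun i : Fin t => ¬ (i:ℕ) < q))
      (fun i => f (some (Sum.inl i)) + (if i ∈ Zf then 1 else 0)) 1 hleafbound
    rw [Finset.sum_add_distrib, Finset.sum_boole] at s1 s2
    simp only [smul_eq_mul, Finset.card_univ, Fintype.card_fin, mul_one,
      Finset.filter_mem_eq_inter, Finset.univ_inter, Nat.cast_id] at s1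
    have hZsub : (Finset.univ.filter (fun i : Fin t => ¬ (i:ℕ) < q)).filter
        (fun i => i ∈ Zf) = Zf := by
      ext i
      simp only [hZf, Finset.mem_filter, Finset.mem_univ, true_and]
      tauto
    rw [hZsub] at s2
    simp only [smul_eq_mul, mul_one, Nat.cast_id] at s2
    have ha : Af.card ≤ q := le_trans (Finset.card_filter_le _ _) (by simp)
    have hz' : Zf.card ≤ (Finset.univ.filter (fun i : Fin t => ¬ (i:ℕ) < q)).card := by
      apply Finset.card_le_card
      intro i hi
      simp only [hZf, Finset.mem_filter, Finset.mem_univ, true_and] at hi ⊢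
      exact hi.1
    -- center value bound
    have hkey : cB ≤ f none → 1 + (Zf.card + Af.card + 1)/2 ≤ f none := by
      intro hcb
      have hinj1 : Function.Injective
          (fun i : Fin t => (some (Sum.inl i) : Option (Fin t ⊕ Fin q))) :=
        fun a b h => by simpa using h
      have hinj2 : Function.Injective
          (fun j : Fin q => (some (Sum.inr j) : Option (Fin t ⊕ Fin q))) :=
        fun a b h => by simpa using h
      set S : Finset (Option (Fin t ⊕ Fin q)) :=
        Zf.image (fun i => some (Sum.inl i)) ∪ Af.image (fun j => some (Sum.inr j)) with hS
      have hdisj : Disjoint (Zf.image (fun i => (some (Sum.inl i) : Option (Fin t ⊕ Fin q))))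
          (Af.image (fun j => some (Sum.inr j))) := by
        rw [Finset.disjoint_left]
        intro a ha hb
        simp only [Finset.mem_image] at ha hb
        obtain ⟨i, -, rfl⟩ := ha
        obtain ⟨j, -, hj⟩ := hb
        simp at hj
      have hScard : S.card = Zf.card + Af.card := by
        rw [hS, Finset.card_union_of_disjoint hdisj,
          Finset.card_image_of_injective _ hinj1, Finset.card_image_of_injective _ hinj2]
      have hsub : ↑S ⊆ (spiderGraph t q).neighborSet none ∩ {u | f u = 0} := by
        intro v hv
        simp only [hS, Finset.coe_union, Set.mem_union, Finset.coe_image, Set.mem_image,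
          Finset.mem_coe] at hv
        rcases hv with ⟨i, hi, rfl⟩ | ⟨j, hj, rfl⟩
        · simp only [hZf, Finset.mem_filter, Finset.mem_univ, true_and] at hi
          exact ⟨adj_none.mpr (Or.inl ⟨i, not_lt.mp hi.1, rfl⟩), hi.2⟩
        · simp only [hAf, Finset.mem_filter, Finset.mem_univ, true_and] at hj
          exact ⟨adj_none.mpr (Or.inr ⟨j, rfl⟩), hj.1⟩
      have hge : Zf.card + Af.card ≤
          ((spiderGraph t q).neighborSet none ∩ {u | f u = 0}).ncard := by
        rw [← hScard, ← Set.ncard_coe_finset]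
        exact Set.ncard_le_ncard hsub (Set.toFinite _)
      rw [hcB] at hcb
      have := Nat.div_le_div_right (c := 2) (Nat.add_le_add_right hge 1)
      omega
    have hcenter : Zf.card + Af.card = 0 ∨ 1 + (Zf.card + Af.card + 1)/2 ≤ f none := by
      rcases Finset.eq_empty_or_nonempty Zf with hZe | ⟨i, hi⟩
      · rcases Finset.eq_empty_or_nonempty Af with hAe | ⟨j, hj⟩
        · left; rw [hZe, hAe]; simp
        · right
          simp only [hAf, Finset.mem_filter, Finset.mem_univ, true_and] at hj
          rcases hUw j hj.1 with h | ⟨-, h⟩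
          · omega
          · exact hkey h
      · right
        simp only [hZf, Finset.mem_filter, Finset.mem_univ, true_and] at hi
        exact hkey (hleaf i (not_lt.mp hi.1) hi.2).2
    omega

end SpiderAux

/-- If `T` is the spider obtained from `K_{1,t}` (`t ≥ 2`) by subdividing `q` of its
edges (`0 ≤ q ≤ t`), then `γ_{StR}(T) = 1 + q + ⌈t/2⌉`. -/
theorem stmt14 (t q : ℕ) (ht : 2 ≤ t) (hq : q ≤ t) :
    (spiderGraph t q).gammaStR = 1 + q + (t + 1) / 2 := by
  apply le_antisymm
  · exact Nat.sInf_le (SpiderAux.mem_set ht hq)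
  · apply le_csInf ⟨_, SpiderAux.mem_set ht hq⟩
    rintro k ⟨f, hf, rfl⟩
    exact SpiderAux.lower ht hq f hf
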